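/- Let 𝒢 : (0, c₀) → ℝ be positive and C¹ with lim_{ρ→0⁺} 𝒢(lρ)/𝒢(ρ) = 1 for every l > 0, and lim_{ρ→0⁺} ρ log(1/ρ)(-𝒢'(ρ))/𝒢(ρ) = γ for some finite γ ≥ 0. Then for any fixed constants 0 < a < b ≤ c₀/2, lim_{ρ→0⁺} (∫_{aρ}^{b} 𝒢(s)/s ds)/(log(1/ρ) · 𝒢(ρ)) = 1/(1+γ). -/

import Mathlib

open Set Filter Topology

set_option maxHeartbeats 1000000 in
/-- `(∫_{aρ}^{b} 𝒢(s)/s ds)/(log(1/ρ) 𝒢(ρ)) → 1/(1+γ)` as `ρ → 0⁺`. -/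
theorem stmt15 (𝒢 𝒢' : ℝ → ℝ) (c₀ γ a b : ℝ) (hc₀ : 0 < c₀) (hγ : 0 ≤ γ)
    (ha : 0 < a) (hab : a < b) (hb : b ≤ c₀ / 2)
    (hderiv : ∀ ρ ∈ Set.Ioo (0:ℝ) c₀, HasDerivAt 𝒢 (𝒢' ρ) ρ)
    (hcont : ContinuousOn 𝒢' (Set.Ioo 0 c₀))
    (hpos : ∀ ρ ∈ Set.Ioo (0:ℝ) c₀, 0 < 𝒢 ρ)
    (hslow : ∀ l > (0:ℝ), Tendsto (fun ρ => 𝒢 (l * ρ) / 𝒢 ρ) (𝓝[>] 0) (𝓝 1))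
    (hlim : Tendsto (fun ρ => ρ * Real.log (1 / ρ) * (-𝒢' ρ) / 𝒢 ρ) (𝓝[>] 0) (𝓝 γ)) :
    Tendsto (fun ρ => (∫ s in (a * ρ)..b, 𝒢 s / s) / (Real.log (1 / ρ) * 𝒢 ρ))
      (𝓝[>] 0) (𝓝 (1 / (1 + γ))) := by
  have hb0 : 0 < b := lt_trans ha hab
  have hbc : b < c₀ := by linarith
  have h1γ : (0:ℝ) < 1 + γ := by linarith
  have hGcont : ContinuousOn 𝒢 (Ioo 0 c₀) := fun x hx => ((hderiv x hx).continuousAt).continuousWithinAt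
  have hfc : ContinuousOn (fun s => 𝒢 s / s) (Ioo 0 c₀) :=
    hGcont.div continuousOn_id (fun x hx => ne_of_gt hx.1)
  have hLcont : ContinuousOn (fun s : ℝ => Real.log (1/s)) (Ioo 0 c₀) := by
    apply ContinuousOn.log
    · exact continuousOn_const.div continuousOn_id (fun x hx => ne_of_gt hx.1)
    · intro x hx; exact ne_of_gt (by rw [one_div]; exact inv_pos.mpr hx.1)
  have hqcont : ContinuousOn (fun s => 𝒢 s / s + Real.log (1/s) * (-𝒢' s)) (Ioo 0 c₀) :=
    hfc.add (hLcont.mul hcont.neg)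
  have hsub : ∀ x y : ℝ, 0 < x → x ≤ y → y < c₀ → Set.uIcc x y ⊆ Ioo 0 c₀ := by
    intro x y hx hxy hy
    rw [Set.uIcc_of_le hxy]
    exact fun s hs => ⟨lt_of_lt_of_le hx hs.1, lt_of_le_of_lt hs.2 hy⟩
  have hLpos : ∀ s : ℝ, 0 < s → s < 1 → 0 < Real.log (1/s) :=
    fun s h0 h1 => Real.log_pos (by rw [lt_div_iff₀ h0]; linarith)
  -- FTC for D
  have hDid : ∀ x y : ℝ, 0 < x → x ≤ y → y < c₀ →
      (∫ s in x..y, (𝒢 s / s + Real.log (1/s) * (-𝒢' s)))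
        = Real.log (1/x) * 𝒢 x - Real.log (1/y) * 𝒢 y := by
    intro x y hx hxy hy
    have hsb := hsub x y hx hxy hy
    have key : ∀ s ∈ Set.uIcc x y, HasDerivAt (fun t => -(Real.log (1/t) * 𝒢 t))
        (𝒢 s / s + Real.log (1/s) * (-𝒢' s)) s := by
      intro s hs
      have hs' := hsb hs
      have hlog : HasDerivAt (fun t : ℝ => Real.log (1/t)) (-(1/s)) s := by
        have h1 : HasDerivAt (fun t : ℝ => -Real.log t) (-(s⁻¹)) s :=
          (Real.hasDerivAt_log (ne_of_gt hs'.1)).neg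
        have heq : (fun t : ℝ => Real.log (1/t)) = fun t => -Real.log t := by
          funext t; rw [one_div, Real.log_inv]
        rw [heq, one_div]
        exact h1
      have h2 := (hlog.mul (hderiv s hs')).neg
      refine h2.congr_deriv ?_
      ring
    have hint : IntervalIntegrable (fun s => 𝒢 s / s + Real.log (1/s) * (-𝒢' s)) MeasureTheory.volume x y :=
      (hqcont.mono hsb).intervalIntegrable
    rw [intervalIntegral.integral_eq_sub_of_hasDerivAt key hint]
    ring
  -- FTC for log ∘ 𝒢
  have hGid : ∀ x y : ℝ, 0 < x → x ≤ y → y < c₀ →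
      (∫ s in x..y, 𝒢' s / 𝒢 s) = Real.log (𝒢 y) - Real.log (𝒢 x) := by
    intro x y hx hxy hy
    have hsb := hsub x y hx hxy hy
    have key : ∀ s ∈ Set.uIcc x y, HasDerivAt (fun t => Real.log (𝒢 t)) (𝒢' s / 𝒢 s) s :=
      fun s hs => (hderiv s (hsb hs)).log (ne_of_gt (hpos s (hsb hs)))
    have hint : IntervalIntegrable (fun s => 𝒢' s / 𝒢 s) MeasureTheory.volume x y :=
      ((hcont.mono hsb).div (hGcont.mono hsb) (fun s hs => ne_of_gt (hpos s (hsb hs)))).intervalIntegrable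
    rw [intervalIntegral.integral_eq_sub_of_hasDerivAt key hint]
  -- FTC for loglog
  have hLLid : ∀ x y : ℝ, 0 < x → x ≤ y → y < 1 →
      (∫ s in x..y, 1 / (s * Real.log (1/s)))
        = Real.log (Real.log (1/x)) - Real.log (Real.log (1/y)) := by
    intro x y hx hxy hy
    have hIcc : Set.uIcc x y = Set.Icc x y := Set.uIcc_of_le hxy
    have key : ∀ s ∈ Set.uIcc x y, HasDerivAt (fun t => -Real.log (Real.log (1/t)))
        (1/(s * Real.log (1/s))) s := by
      intro s hs
      rw [hIcc] at hs
      have hs0 : 0 < s := lt_of_lt_of_le hx hs.1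
      have hs1 : s < 1 := lt_of_le_of_lt hs.2 hy
      have hlogneg : Real.log s < 0 := Real.log_neg hs0 hs1
      have h1 : HasDerivAt (fun t : ℝ => -Real.log t) (-(s⁻¹)) s :=
        (Real.hasDerivAt_log (ne_of_gt hs0)).neg
      have h2 := (h1.log (by linarith : -Real.log s ≠ 0)).neg
      have heq : (fun t : ℝ => -Real.log (Real.log (1/t))) = fun t => -Real.log (-Real.log t) := by
        funext t; rw [one_div, Real.log_inv]
      rw [heq]
      refine h2.congr_deriv ?_
      have hls : Real.log (1/s) = -Real.log s := by rw [one_div, Real.log_inv]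
      rw [hls]
      field_simp
    have hint : IntervalIntegrable (fun s => 1 / (s * Real.log (1/s))) MeasureTheory.volume x y := by
      apply ContinuousOn.intervalIntegrable
      rw [hIcc]
      apply continuousOn_const.div
      · apply continuousOn_id.mul
        apply ContinuousOn.log
        · exact continuousOn_const.div continuousOn_id
            (fun s hs => ne_of_gt (lt_of_lt_of_le hx hs.1))
        · intro s hs
          exact ne_of_gt (by rw [one_div]; exact inv_pos.mpr (lt_of_lt_of_le hx hs.1))
      · intro s hs
        have hs0 : 0 < s := lt_of_lt_of_le hx hs.1
        have hs1 : s < 1 := lt_of_le_of_lt hs.2 hy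
        exact ne_of_gt (mul_pos hs0 (hLpos s hs0 hs1))
    rw [intervalIntegral.integral_eq_sub_of_hasDerivAt key hint]
    simp only [one_div, Real.log_inv]
    ring
  -- extraction
  have extract : ∀ (P : ℝ → Prop), (∀ᶠ s in 𝓝[>] (0:ℝ), P s) →
      ∃ δ : ℝ, 0 < δ ∧ ∀ s, 0 < s → s < δ → P s := by
    intro P hP
    rcases mem_nhdsGT_iff_exists_Ioo_subset.mp hP with ⟨u, hu, hsubs⟩
    exact ⟨u, hu, fun s h1 h2 => hsubs ⟨h1, h2⟩⟩
  have hrbound : ∀ ε : ℝ, 0 < ε → ∃ δ, 0 < δ ∧ ∀ s, 0 < s → s < δ →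
      |s * Real.log (1/s) * (-𝒢' s) / 𝒢 s - γ| < ε := by
    intro ε hε
    apply extract
    have := Metric.tendsto_nhds.mp hlim ε hε
    simpa [Real.dist_eq] using this
  have hslowa : ∀ ε : ℝ, 0 < ε → ∃ δ, 0 < δ ∧ ∀ s, 0 < s → s < δ →
      |𝒢 (a*s) / 𝒢 s - 1| < ε := by
    intro ε hε
    apply extract
    have := Metric.tendsto_nhds.mp (hslow a ha) ε hε
    simpa [Real.dist_eq] using this
  -- D tends to infinity
  have hDtop : Tendsto (fun ρ => Real.log (1/ρ) * 𝒢 ρ) (𝓝[>] (0:ℝ)) atTop := by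
    obtain ⟨δ₁, hδ₁, hδ₁p⟩ := hrbound (1/2) (by norm_num)
    set δ : ℝ := min δ₁ (min c₀ 1) / 2 with hδdef
    have hm0 : 0 < min δ₁ (min c₀ 1) := lt_min hδ₁ (lt_min hc₀ one_pos)
    have hδ0 : 0 < δ := by positivity
    have hδm : δ < min δ₁ (min c₀ 1) := by rw [hδdef]; linarith
    have hδδ₁ : δ < δ₁ := hδm.trans_le (min_le_left _ _)
    have hδc₀ : δ < c₀ := hδm.trans_le ((min_le_right _ _).trans (min_le_left _ _))
    have hδ1 : δ < 1 := hδm.trans_le ((min_le_right _ _).trans (min_le_right _ _))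
    set C : ℝ := (1/2) * Real.log (Real.log (1/δ)) + Real.log (𝒢 δ) with hCdef
    have key : ∀ ρ : ℝ, 0 < ρ → ρ < δ →
        Real.exp ((1/2) * Real.log (Real.log (1/ρ)) + C) ≤ Real.log (1/ρ) * 𝒢 ρ := by
      intro ρ hρ0 hρδ
      have hρc₀ : ρ < c₀ := hρδ.trans hδc₀
      have hρ1 : ρ < 1 := hρδ.trans hδ1
      have hi1 : IntervalIntegrable (fun s => 𝒢' s / 𝒢 s) MeasureTheory.volume ρ δ := by
        have hsb := hsub ρ δ hρ0 hρδ.le hδc₀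
        exact ((hcont.mono hsb).div (hGcont.mono hsb)
          (fun s hs => ne_of_gt (hpos s (hsb hs)))).intervalIntegrable
      have hi2 : IntervalIntegrable (fun s => (1/2) * (1 / (s * Real.log (1/s))))
          MeasureTheory.volume ρ δ := by
        apply ContinuousOn.intervalIntegrable
        apply continuousOn_const.mul
        apply continuousOn_const.div
        · apply continuousOn_id.mul
          apply ContinuousOn.log
          · refine continuousOn_const.div continuousOn_id (fun s hs => ?_)
            rw [Set.uIcc_of_le hρδ.le] at hs
            exact ne_of_gt (lt_of_lt_of_le hρ0 hs.1)
          · intro s hs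
            rw [Set.uIcc_of_le hρδ.le] at hs
            exact ne_of_gt (by rw [one_div]; exact inv_pos.mpr (lt_of_lt_of_le hρ0 hs.1))
        · intro s hs
          rw [Set.uIcc_of_le hρδ.le] at hs
          have hs0 : 0 < s := lt_of_lt_of_le hρ0 hs.1
          have hs1 : s < 1 := lt_of_le_of_lt hs.2 hδ1
          exact ne_of_gt (mul_pos hs0 (hLpos s hs0 hs1))
      have hmono : (∫ s in ρ..δ, 𝒢' s / 𝒢 s)
          ≤ ∫ s in ρ..δ, (1/2) * (1 / (s * Real.log (1/s))) := by
        apply intervalIntegral.integral_mono_on hρδ.le hi1 hi2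
        intro s hs
        have hs0 : 0 < s := lt_of_lt_of_le hρ0 hs.1
        have hs1 : s < 1 := lt_of_le_of_lt hs.2 hδ1
        have hsc : s < c₀ := lt_of_le_of_lt hs.2 hδc₀
        have hLs : 0 < Real.log (1/s) := hLpos s hs0 hs1
        have hGs : 0 < 𝒢 s := hpos s ⟨hs0, hsc⟩
        have hsL : 0 < s * Real.log (1/s) := mul_pos hs0 hLs
        have hr := hδ₁p s hs0 (lt_of_le_of_lt hs.2 hδδ₁)
        have h1 : -(1/2 : ℝ) ≤ s * Real.log (1/s) * (-𝒢' s) / 𝒢 s := by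
          have := abs_lt.mp hr; linarith
        have h1' : -(1/2) * 𝒢 s ≤ s * Real.log (1/s) * (-𝒢' s) := (le_div_iff₀ hGs).mp h1
        have h2 : 𝒢' s * (s * Real.log (1/s)) ≤ (1/2) * 𝒢 s := by nlinarith
        rw [div_le_iff₀ hGs, show (1/2) * (1 / (s * Real.log (1/s))) * 𝒢 s
          = ((1/2) * 𝒢 s) / (s * Real.log (1/s)) by ring, le_div_iff₀ hsL]
        linarith
      rw [hGid ρ δ hρ0 hρδ.le hδc₀] at hmono
      rw [intervalIntegral.integral_const_mul, hLLid ρ δ hρ0 hρδ.le hδ1] at hmono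
      -- so log 𝒢 ρ ≥ C' ...
      have hGρ : 0 < 𝒢 ρ := hpos ρ ⟨hρ0, hρc₀⟩
      have hLρ : 0 < Real.log (1/ρ) := hLpos ρ hρ0 hρ1
      have e1 : Real.log (1/ρ) * 𝒢 ρ
          = Real.exp (Real.log (Real.log (1/ρ)) + Real.log (𝒢 ρ)) := by
        rw [Real.exp_add, Real.exp_log hLρ, Real.exp_log hGρ]
      rw [e1]
      apply Real.exp_le_exp.mpr
      rw [hCdef]
      linarith
    have htend : Tendsto (fun ρ : ℝ => Real.exp ((1/2) * Real.log (Real.log (1/ρ)) + C))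
        (𝓝[>] (0:ℝ)) atTop := by
      have t0 : Tendsto (fun ρ : ℝ => 1/ρ) (𝓝[>] (0:ℝ)) atTop := by
        simpa [one_div] using (tendsto_inv_nhdsGT_zero (𝕜 := ℝ))
      have t1 : Tendsto (fun ρ : ℝ => Real.log (Real.log (1/ρ))) (𝓝[>] (0:ℝ)) atTop :=
        Real.tendsto_log_atTop.comp (Real.tendsto_log_atTop.comp t0)
      have t2 : Tendsto (fun ρ : ℝ => (1/2) * Real.log (Real.log (1/ρ)) + C)
          (𝓝[>] (0:ℝ)) atTop :=
        tendsto_atTop_add_const_right _ C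
          (Tendsto.const_mul_atTop (by norm_num : (0:ℝ) < 1/2) t1)
      exact Real.tendsto_exp_atTop.comp t2
    apply tendsto_atTop_mono' _ _ htend
    filter_upwards [Ioo_mem_nhdsGT hδ0] with ρ hρ
    exact key ρ hρ.1 hρ.2
  -- main argument
  rw [Metric.tendsto_nhds]
  intro ε hε
  set ε₁ : ℝ := min (ε/10) (1/2) with hε₁def
  have hε₁0 : 0 < ε₁ := lt_min (by linarith) one_half_pos
  have hε₁half : ε₁ ≤ 1/2 := min_le_right _ _
  have hε₁ε : ε₁ ≤ ε/10 := min_le_left _ _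
  obtain ⟨δ₂, hδ₂0, hP₂⟩ := hslowa ε₁ hε₁0
  obtain ⟨δ₃, hδ₃0, hP₃⟩ := hrbound ε₁ hε₁0
  set δ : ℝ := min (min δ₂ δ₃) (min 1 (min c₀ (b/a))) / 2 with hδdef
  have hm0 : 0 < min (min δ₂ δ₃) (min 1 (min c₀ (b/a))) :=
    lt_min (lt_min hδ₂0 hδ₃0) (lt_min one_pos (lt_min hc₀ (div_pos hb0 ha)))
  have hδ0 : 0 < δ := by positivity
  have hδm : δ < min (min δ₂ δ₃) (min 1 (min c₀ (b/a))) := by rw [hδdef]; linarith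
  have hδδ₂ : δ < δ₂ := hδm.trans_le ((min_le_left _ _).trans (min_le_left _ _))
  have hδδ₃ : δ < δ₃ := hδm.trans_le ((min_le_left _ _).trans (min_le_right _ _))
  have hδ1 : δ < 1 := hδm.trans_le ((min_le_right _ _).trans (min_le_left _ _))
  have hδc₀ : δ < c₀ := hδm.trans_le ((min_le_right _ _).trans
    ((min_le_right _ _).trans (min_le_left _ _)))
  have hδba : δ < b/a := hδm.trans_le ((min_le_right _ _).trans
    ((min_le_right _ _).trans (min_le_right _ _)))
  have haδb : a * δ < b := by
    have := mul_lt_mul_of_pos_left hδba ha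
    rwa [mul_div_cancel₀ b (ne_of_gt ha)] at this
  have haδ0 : 0 < a * δ := mul_pos ha hδ0
  -- fixed constants
  set Hδ : ℝ := ∫ s in (a*δ)..b, 𝒢 s / s with hHδdef
  set Dδ : ℝ := Real.log (1/δ) * 𝒢 δ with hDδdef
  set P : ℝ := |Hδ - Dδ/(1+γ)| + 4*ε₁*|Dδ| with hPdef
  have hP0 : 0 ≤ P := by positivity
  filter_upwards [Ioo_mem_nhdsGT hδ0,
    hDtop.eventually_ge_atTop (max 1 (P/ε₁))] with ρ hρmem hρD
  obtain ⟨hρ0, hρδ⟩ := hρmem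
  have hρc₀ : ρ < c₀ := hρδ.trans hδc₀
  have hρ1 : ρ < 1 := hρδ.trans hδ1
  set Dρ : ℝ := Real.log (1/ρ) * 𝒢 ρ with hDρdef
  have hDρ1 : (1:ℝ) ≤ Dρ := le_trans (le_max_left _ _) hρD
  have hDρP : P/ε₁ ≤ Dρ := le_trans (le_max_right _ _) hρD
  have hDρ0 : 0 < Dρ := lt_of_lt_of_le one_pos hDρ1
  -- split the integral
  have hi1 : IntervalIntegrable (fun s => 𝒢 s / s) MeasureTheory.volume (a*ρ) (a*δ) :=
    (hfc.mono (hsub _ _ (mul_pos ha hρ0)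
      (mul_le_mul_of_nonneg_left hρδ.le ha.le) (haδb.trans hbc))).intervalIntegrable
  have hi2 : IntervalIntegrable (fun s => 𝒢 s / s) MeasureTheory.volume (a*δ) b :=
    (hfc.mono (hsub _ _ haδ0 haδb.le hbc)).intervalIntegrable
  have hsplit : (∫ s in (a*ρ)..(a*δ), 𝒢 s / s) + Hδ = ∫ s in (a*ρ)..b, 𝒢 s / s :=
    intervalIntegral.integral_add_adjacent_intervals hi1 hi2
  -- change of variables
  have hcv : (∫ s in (a*ρ)..(a*δ), 𝒢 s / s) = ∫ s in ρ..δ, 𝒢 (a*s) / s := by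
    have h := intervalIntegral.integral_comp_mul_left (a := ρ) (b := δ)
      (fun s => 𝒢 s / s) (ne_of_gt ha)
    rw [smul_eq_mul] at h
    have h2 : (∫ s in (a*ρ)..(a*δ), 𝒢 s / s) = a * ∫ x in ρ..δ, 𝒢 (a*x) / (a*x) := by
      rw [h]; field_simp
    rw [h2, ← intervalIntegral.integral_const_mul]
    apply intervalIntegral.integral_congr
    intro s hs
    rw [Set.uIcc_of_le hρδ.le] at hs
    have hs0 : 0 < s := lt_of_lt_of_le hρ0 hs.1
    field_simp
  -- integrability on [ρ,δ]
  have hsbρδ := hsub ρ δ hρ0 hρδ.le hδc₀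
  have hiq : IntervalIntegrable (fun s => 𝒢 s / s + Real.log (1/s) * (-𝒢' s))
      MeasureTheory.volume ρ δ := (hqcont.mono hsbρδ).intervalIntegrable
  have hif : IntervalIntegrable (fun s => 𝒢 s / s) MeasureTheory.volume ρ δ :=
    (hfc.mono hsbρδ).intervalIntegrable
  have hpcont : ContinuousOn (fun s => 𝒢 (a*s) / s) (Set.uIcc ρ δ) := by
    apply ContinuousOn.div
    · apply hGcont.comp ((continuous_const.mul continuous_id).continuousOn)
      intro s hs
      have hs' := hsbρδ hs
      rw [Set.uIcc_of_le hρδ.le] at hs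
      constructor
      · exact mul_pos ha hs'.1
      · calc a * s ≤ a * δ := mul_le_mul_of_nonneg_left hs.2 ha.le
          _ < b := haδb
          _ < c₀ := hbc
    · exact continuousOn_id
    · intro s hs; exact ne_of_gt (hsbρδ hs).1
  have hip : IntervalIntegrable (fun s => 𝒢 (a*s) / s) MeasureTheory.volume ρ δ :=
    hpcont.intervalIntegrable
  -- D identity
  have hDq : (∫ s in ρ..δ, (𝒢 s / s + Real.log (1/s) * (-𝒢' s))) = Dρ - Dδ :=
    hDid ρ δ hρ0 hρδ.le hδc₀
  -- pointwise facts on Icc ρ δ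
  have hptfacts : ∀ s ∈ Set.Icc ρ δ, 0 < s ∧ s < c₀ ∧ 0 < 𝒢 s ∧ 0 < Real.log (1/s) := by
    intro s hs
    have hs0 : 0 < s := lt_of_lt_of_le hρ0 hs.1
    have hsc : s < c₀ := lt_of_le_of_lt hs.2 hδc₀
    exact ⟨hs0, hsc, hpos s ⟨hs0, hsc⟩, hLpos s hs0 (lt_of_le_of_lt hs.2 hδ1)⟩
  -- (4a) ∫ 𝒢/s ≤ 2 ∫ q
  have h4a : (∫ s in ρ..δ, 𝒢 s / s)
      ≤ 2 * ∫ s in ρ..δ, (𝒢 s / s + Real.log (1/s) * (-𝒢' s)) := by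
    rw [← intervalIntegral.integral_const_mul]
    apply intervalIntegral.integral_mono_on hρδ.le hif (hiq.const_mul 2)
    intro s hs
    obtain ⟨hs0, hsc, hGs, hLs⟩ := hptfacts s hs
    have hr := hP₃ s hs0 (lt_of_le_of_lt hs.2 hδδ₃)
    have hrl := (abs_lt.mp hr).1
    have hq_eq : 𝒢 s / s + Real.log (1/s) * (-𝒢' s)
        = 𝒢 s / s * (1 + s * Real.log (1/s) * (-𝒢' s) / 𝒢 s) := by
      field_simp
    rw [hq_eq]
    have hfs : 0 < 𝒢 s / s := div_pos hGs hs0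
    have h5 : (1/2:ℝ) ≤ 1 + s * Real.log (1/s) * (-𝒢' s) / 𝒢 s := by linarith
    have h6 := mul_le_mul_of_nonneg_left h5 hfs.le
    linarith
  -- ∫ 𝒢/s ≥ 0
  have h4c : (0:ℝ) ≤ ∫ s in ρ..δ, 𝒢 s / s := by
    apply intervalIntegral.integral_nonneg hρδ.le
    intro s hs
    obtain ⟨hs0, _, hGs, _⟩ := hptfacts s hs
    exact (div_pos hGs hs0).le
  -- (4b)
  have h4b : |∫ s in ρ..δ, (𝒢 (a*s) / s - (𝒢 s / s + Real.log (1/s) * (-𝒢' s))/(1+γ))|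
      ≤ 2*ε₁ * ∫ s in ρ..δ, 𝒢 s / s := by
    calc |∫ s in ρ..δ, (𝒢 (a*s) / s - (𝒢 s / s + Real.log (1/s) * (-𝒢' s))/(1+γ))|
        ≤ ∫ s in ρ..δ, |𝒢 (a*s) / s - (𝒢 s / s + Real.log (1/s) * (-𝒢' s))/(1+γ)| :=
          intervalIntegral.abs_integral_le_integral_abs hρδ.le
      _ ≤ ∫ s in ρ..δ, 2*ε₁ * (𝒢 s / s) := by
          apply intervalIntegral.integral_mono_on hρδ.le
          · exact ((hpcont.sub ((hqcont.mono hsbρδ).div_const _)).abs).intervalIntegrable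
          · exact (hif.const_mul _)
          intro s hs
          obtain ⟨hs0, hsc, hGs, hLs⟩ := hptfacts s hs
          have hr := hP₃ s hs0 (lt_of_le_of_lt hs.2 hδδ₃)
          have hu := hP₂ s hs0 (lt_of_le_of_lt hs.2 hδδ₂)
          have e1 : 𝒢 (a*s) / s - (𝒢 s / s + Real.log (1/s) * (-𝒢' s))/(1+γ)
              = (𝒢 s / s) * ((𝒢 (a*s)/𝒢 s - 1)
                + (γ - s * Real.log (1/s) * (-𝒢' s) / 𝒢 s)/(1+γ)) := by
            field_simp
            ring
          have t4 : |(γ - s * Real.log (1/s) * (-𝒢' s) / 𝒢 s)/(1+γ)| ≤ ε₁ := by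
            rw [abs_div, abs_of_pos h1γ, div_le_iff₀ h1γ,
              abs_sub_comm]
            have hm := mul_nonneg hε₁0.le hγ
            have : ε₁ * (1+γ) = ε₁ + ε₁*γ := by ring
            linarith [hr.le]
          have t5 : |(𝒢 (a*s)/𝒢 s - 1)
                + (γ - s * Real.log (1/s) * (-𝒢' s) / 𝒢 s)/(1+γ)| ≤ 2*ε₁ := by
            calc _ ≤ |𝒢 (a*s)/𝒢 s - 1|
                + |(γ - s * Real.log (1/s) * (-𝒢' s) / 𝒢 s)/(1+γ)| := abs_add_le _ _
              _ ≤ ε₁ + ε₁ := add_le_add hu.le t4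
              _ = 2*ε₁ := by ring
          rw [e1, abs_mul, abs_of_pos (div_pos hGs hs0)]
          calc 𝒢 s / s * |(𝒢 (a*s)/𝒢 s - 1)
                + (γ - s * Real.log (1/s) * (-𝒢' s) / 𝒢 s)/(1+γ)|
              ≤ 𝒢 s / s * (2*ε₁) := mul_le_mul_of_nonneg_left t5 (div_pos hGs hs0).le
            _ = 2*ε₁ * (𝒢 s / s) := by ring
      _ = 2*ε₁ * ∫ s in ρ..δ, 𝒢 s / s := intervalIntegral.integral_const_mul _ _
  -- E decomposition
  have hE : (∫ s in ρ..δ, (𝒢 (a*s) / s - (𝒢 s / s + Real.log (1/s) * (-𝒢' s))/(1+γ)))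
      = (∫ s in ρ..δ, 𝒢 (a*s) / s)
        - (∫ s in ρ..δ, (𝒢 s / s + Real.log (1/s) * (-𝒢' s)))/(1+γ) := by
    rw [intervalIntegral.integral_sub hip (hiq.div_const _), intervalIntegral.integral_div]
  -- assemble
  have hN : (∫ s in (a*ρ)..b, 𝒢 s / s) = Hδ + ∫ s in ρ..δ, 𝒢 (a*s) / s := by
    rw [← hsplit, hcv]; ring
  have hDρδ : Dρ - Dδ ≥ 0 := by
    rw [← hDq]; linarith [h4a, h4c]
  have hEbound : |(∫ s in (a*ρ)..b, 𝒢 s / s) - Dρ/(1+γ)| ≤ P + 4*ε₁*Dρ := by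
    have e2 : (∫ s in (a*ρ)..b, 𝒢 s / s) - Dρ/(1+γ)
        = (Hδ - Dδ/(1+γ))
          + (∫ s in ρ..δ, (𝒢 (a*s) / s - (𝒢 s / s + Real.log (1/s) * (-𝒢' s))/(1+γ))) := by
      rw [hE, hN, hDq]
      ring
    rw [e2]
    have habs2 : |∫ s in ρ..δ, (𝒢 (a*s) / s - (𝒢 s / s + Real.log (1/s) * (-𝒢' s))/(1+γ))|
        ≤ 4*ε₁*(Dρ - Dδ) := by
      calc _ ≤ 2*ε₁ * ∫ s in ρ..δ, 𝒢 s / s := h4b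
        _ ≤ 2*ε₁ * (2 * ∫ s in ρ..δ, (𝒢 s / s + Real.log (1/s) * (-𝒢' s))) := by
            apply mul_le_mul_of_nonneg_left h4a
            positivity
        _ = 4*ε₁*(Dρ - Dδ) := by rw [hDq]; ring
    calc _ ≤ |Hδ - Dδ/(1+γ)|
          + |∫ s in ρ..δ, (𝒢 (a*s) / s - (𝒢 s / s + Real.log (1/s) * (-𝒢' s))/(1+γ))| :=
          abs_add_le _ _
      _ ≤ |Hδ - Dδ/(1+γ)| + 4*ε₁*(Dρ - Dδ) := by linarith
      _ ≤ P + 4*ε₁*Dρ := by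
          rw [hPdef]
          have : -Dδ ≤ |Dδ| := neg_le_abs _
          nlinarith [hε₁0.le]
  -- finish
  rw [Real.dist_eq]
  have hkey : (∫ s in (a*ρ)..b, 𝒢 s / s) / Dρ - 1/(1+γ)
      = ((∫ s in (a*ρ)..b, 𝒢 s / s) - Dρ/(1+γ))/Dρ := by
    field_simp
  rw [hkey, abs_div, abs_of_pos hDρ0]
  have hPD : P/Dρ ≤ ε₁ := by
    rw [div_le_iff₀ hDρ0]
    calc P = ε₁ * (P/ε₁) := by field_simp
      _ ≤ ε₁ * Dρ := mul_le_mul_of_nonneg_left hDρP hε₁0.le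
  calc |(∫ s in (a*ρ)..b, 𝒢 s / s) - Dρ/(1+γ)| / Dρ ≤ (P + 4*ε₁*Dρ)/Dρ := by
        exact (div_le_div_iff_of_pos_right hDρ0).mpr hEbound
    _ = P/Dρ + 4*ε₁ := by field_simp
    _ ≤ ε₁ + 4*ε₁ := by linarith
    _ = 5*ε₁ := by ring
    _ < ε := by linarith
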